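/- arXiv:1403.3965 — 2 statements merged into one kernel-verified Lean document; each statement's English description precedes it below -/
import Mathlib

section
/- Let (u,v,h) be a classical solution of Problem 2 (the heat–wave system coupled through a point mass) on [0,T] with initial data u₀, v₀, v₁, where v₀ is continuously differentiable. Then for every t ∈ [0,T] the coupled energy identity (1/2)∫_{−1}^{0} u(t,x)² dx + (1/2) h′(t)² + (1/2)∫_0^1 ((∂_t v(t,x))² + (∂_x v(t,x))²) dx + ∫_0^t ∫_{−1}^{0} (∂_x u(s,x))² dx ds = (1/2)∫_{−1}^{0} u₀(x)² dx + (1/2)∫_0^1 (v₁(x)² + v₀′(x)²) dx holds, where the term (1/2)h′(t)² is the kinetic energy of the interface point mass. -/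
open Set Real MeasureTheory intervalIntegral

/-- A classical solution of the heat equation `∂_t u = ∂_x² u` on `[0,T] × [−1,0]`:
`u` is continuous on the closed rectangle, the partial derivatives `ut = ∂_t u`,
`ux = ∂_x u`, `uxx = ∂_x² u` exist and are continuous there, and `∂_t u = ∂_x² u`. -/
structure IsHeatSol (T : ℝ) (u ut ux uxx : ℝ → ℝ → ℝ) : Prop where
  contu : ContinuousOn (fun p : ℝ × ℝ => u p.1 p.2) (Icc 0 T ×ˢ Icc (-1) 0)
  hut : ∀ t ∈ Icc (0:ℝ) T, ∀ x ∈ Icc (-1:ℝ) 0, HasDerivAt (fun τ => u τ x) (ut t x) t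
  hux : ∀ t ∈ Icc (0:ℝ) T, ∀ x ∈ Icc (-1:ℝ) 0, HasDerivAt (fun y => u t y) (ux t x) x
  huxx : ∀ t ∈ Icc (0:ℝ) T, ∀ x ∈ Icc (-1:ℝ) 0, HasDerivAt (fun y => ux t y) (uxx t x) x
  contut : ContinuousOn (fun p : ℝ × ℝ => ut p.1 p.2) (Icc 0 T ×ˢ Icc (-1) 0)
  contux : ContinuousOn (fun p : ℝ × ℝ => ux p.1 p.2) (Icc 0 T ×ˢ Icc (-1) 0)
  contuxx : ContinuousOn (fun p : ℝ × ℝ => uxx p.1 p.2) (Icc 0 T ×ˢ Icc (-1) 0)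
  heat : ∀ t ∈ Icc (0:ℝ) T, ∀ x ∈ Icc (-1:ℝ) 0, ut t x = uxx t x

/-- A classical solution of the wave equation `∂_t² v = ∂_x² v` on `[0,T] × [0,1]`:
`v` is twice continuously differentiable up to the boundary, with first partial
derivatives `vt`, `vx`, second partial derivatives `vtt`, `vxx` and mixed partial
derivative `vtx`, all continuous on the closed rectangle. -/
structure IsWaveSol (T : ℝ) (v vt vx vtt vtx vxx : ℝ → ℝ → ℝ) : Prop where
  contv : ContinuousOn (fun p : ℝ × ℝ => v p.1 p.2) (Icc 0 T ×ˢ Icc 0 1)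
  hvt : ∀ t ∈ Icc (0:ℝ) T, ∀ x ∈ Icc (0:ℝ) 1, HasDerivAt (fun τ => v τ x) (vt t x) t
  hvx : ∀ t ∈ Icc (0:ℝ) T, ∀ x ∈ Icc (0:ℝ) 1, HasDerivAt (fun y => v t y) (vx t x) x
  hvtt : ∀ t ∈ Icc (0:ℝ) T, ∀ x ∈ Icc (0:ℝ) 1, HasDerivAt (fun τ => vt τ x) (vtt t x) t
  hvtx : ∀ t ∈ Icc (0:ℝ) T, ∀ x ∈ Icc (0:ℝ) 1, HasDerivAt (fun y => vt t y) (vtx t x) x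
  hvxt : ∀ t ∈ Icc (0:ℝ) T, ∀ x ∈ Icc (0:ℝ) 1, HasDerivAt (fun τ => vx τ x) (vtx t x) t
  hvxx : ∀ t ∈ Icc (0:ℝ) T, ∀ x ∈ Icc (0:ℝ) 1, HasDerivAt (fun y => vx t y) (vxx t x) x
  contvt : ContinuousOn (fun p : ℝ × ℝ => vt p.1 p.2) (Icc 0 T ×ˢ Icc 0 1)
  contvx : ContinuousOn (fun p : ℝ × ℝ => vx p.1 p.2) (Icc 0 T ×ˢ Icc 0 1)
  contvtt : ContinuousOn (fun p : ℝ × ℝ => vtt p.1 p.2) (Icc 0 T ×ˢ Icc 0 1)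
  contvtx : ContinuousOn (fun p : ℝ × ℝ => vtx p.1 p.2) (Icc 0 T ×ˢ Icc 0 1)
  contvxx : ContinuousOn (fun p : ℝ × ℝ => vxx p.1 p.2) (Icc 0 T ×ˢ Icc 0 1)
  wave : ∀ t ∈ Icc (0:ℝ) T, ∀ x ∈ Icc (0:ℝ) 1, vtt t x = vxx t x

/-- Problem 2 (the heat–wave system coupled through a point mass) on `[0,T]` with
initial data `u₀, v₀, v₁`: the heat equation on `[0,T] × [−1,0]` and the wave
equation on `[0,T] × [0,1]`, coupled at the interface `x = 0` through a point mass
with displacement `h` (a twice continuously differentiable function with first and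
second derivatives `h'` and `h''`), via `u(t,0) = h'(t) = ∂_t v(t,0)` and Newton's
law `h''(t) = ∂_x v(t,0) − ∂_x u(t,0)`, with homogeneous boundary conditions
`u(t,−1) = v(t,1) = 0` and `h(0) = h'(0) = 0`. -/
structure Problem2 (T : ℝ) (u ut ux uxx v vt vx vtt vtx vxx : ℝ → ℝ → ℝ)
    (h h' h'' : ℝ → ℝ) (u₀ v₀ v₁ : ℝ → ℝ) : Prop where
  heatSol : IsHeatSol T u ut ux uxx
  waveSol : IsWaveSol T v vt vx vtt vtx vxx
  hd : ∀ t ∈ Icc (0:ℝ) T, HasDerivAt h (h' t) t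
  hdd : ∀ t ∈ Icc (0:ℝ) T, HasDerivAt h' (h'' t) t
  conth'' : ContinuousOn h'' (Icc 0 T)
  kinematic1 : ∀ t ∈ Icc (0:ℝ) T, u t 0 = h' t
  kinematic2 : ∀ t ∈ Icc (0:ℝ) T, h' t = vt t 0
  newton : ∀ t ∈ Icc (0:ℝ) T, h'' t = vx t 0 - ux t 0
  bdryu : ∀ t ∈ Icc (0:ℝ) T, u t (-1) = 0
  bdryv : ∀ t ∈ Icc (0:ℝ) T, v t 1 = 0
  initu : ∀ x ∈ Icc (-1:ℝ) 0, u 0 x = u₀ x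
  inith : h 0 = 0
  inith' : h' 0 = 0
  initv : ∀ x ∈ Icc (0:ℝ) 1, v 0 x = v₀ x
  initvt : ∀ x ∈ Icc (0:ℝ) 1, vt 0 x = v₁ x

private lemma cont_left {f : ℝ → ℝ → ℝ} {A B : Set ℝ}
    (hf : ContinuousOn (fun p : ℝ × ℝ => f p.1 p.2) (A ×ˢ B)) {x : ℝ} (hx : x ∈ B) :
    ContinuousOn (fun s => f s x) A := by
  have : (fun s => f s x) = (fun p : ℝ × ℝ => f p.1 p.2) ∘ (fun s => (s, x)) := rfl
  rw [this]
  exact hf.comp ((continuous_id.prodMk continuous_const).continuousOn)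
    (fun s hs => ⟨hs, hx⟩)

private lemma cont_right {f : ℝ → ℝ → ℝ} {A B : Set ℝ}
    (hf : ContinuousOn (fun p : ℝ × ℝ => f p.1 p.2) (A ×ˢ B)) {s : ℝ} (hs : s ∈ A) :
    ContinuousOn (fun x => f s x) B := by
  have : (fun x => f s x) = (fun p : ℝ × ℝ => f p.1 p.2) ∘ (fun x => (s, x)) := rfl
  rw [this]
  exact hf.comp ((continuous_const.prodMk continuous_id).continuousOn)
    (fun x hx => ⟨hs, hx⟩)

private lemma swap_aux {f : ℝ → ℝ → ℝ} {t a b : ℝ} (ht0 : 0 ≤ t) (hab : a ≤ b)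
    (hf : ContinuousOn (fun p : ℝ × ℝ => f p.1 p.2) (Icc 0 t ×ˢ Icc a b)) :
    (∫ x in a..b, ∫ s in (0:ℝ)..t, f s x) = (∫ s in (0:ℝ)..t, ∫ x in a..b, f s x)
    ∧ IntervalIntegrable (fun s => ∫ x in a..b, f s x) volume 0 t := by
  have hprod : Integrable (Function.uncurry f)
      ((volume.restrict (Ioc 0 t)).prod (volume.restrict (Ioc a b))) := by
    rw [Measure.prod_restrict]
    exact (hf.integrableOn_compact (isCompact_Icc.prod isCompact_Icc)).mono_set
      (prod_mono Ioc_subset_Icc_self Ioc_subset_Icc_self)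
  constructor
  · rw [intervalIntegral.integral_of_le hab, intervalIntegral.integral_of_le ht0]
    simp_rw [intervalIntegral.integral_of_le ht0, intervalIntegral.integral_of_le hab]
    exact (MeasureTheory.integral_integral_swap hprod).symm
  · rw [intervalIntegrable_iff_integrableOn_Ioc_of_le ht0]
    have := hprod.integral_prod_left
    simp_rw [intervalIntegral.integral_of_le hab]
    exact this

/-- Coupled energy identity for a classical solution `(u,v,h)` of
Problem 2 (the heat–wave system coupled through a point mass) on `[0,T]` with initial
data `u₀, v₀, v₁`, `v₀` continuously differentiable with derivative `v₀'`:
`(1/2)∫_{−1}^0 u(t)² + (1/2) h'(t)² + (1/2)∫_0^1 ((∂_t v(t))² + (∂_x v(t))²)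
 + ∫_0^t ∫_{−1}^0 (∂_x u)² = (1/2)∫_{−1}^0 u₀² + (1/2)∫_0^1 (v₁² + v₀'²)`,
where `(1/2) h'(t)²` is the kinetic energy of the interface point mass. -/
theorem problem2_energy_identity (T : ℝ) (hT : 0 ≤ T)
    (u ut ux uxx v vt vx vtt vtx vxx : ℝ → ℝ → ℝ) (h h' h'' : ℝ → ℝ)
    (u₀ v₀ v₀' v₁ : ℝ → ℝ)
    (hP : Problem2 T u ut ux uxx v vt vx vtt vtx vxx h h' h'' u₀ v₀ v₁)
    (hv₀d : ∀ x ∈ Icc (0:ℝ) 1, HasDerivAt v₀ (v₀' x) x)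
    (hv₀c : ContinuousOn v₀' (Icc 0 1)) :
    ∀ t ∈ Icc (0:ℝ) T,
      (1 / 2) * (∫ x in (-1:ℝ)..0, (u t x) ^ 2)
        + (1 / 2) * (h' t) ^ 2
        + (1 / 2) * (∫ x in (0:ℝ)..1, ((vt t x) ^ 2 + (vx t x) ^ 2))
        + (∫ s in (0:ℝ)..t, ∫ x in (-1:ℝ)..0, (ux s x) ^ 2)
      = (1 / 2) * (∫ x in (-1:ℝ)..0, (u₀ x) ^ 2)
        + (1 / 2) * (∫ x in (0:ℝ)..1, ((v₁ x) ^ 2 + (v₀' x) ^ 2)) := by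
  intro t ht
  obtain ⟨ht0, htT⟩ := ht
  have hsub : Icc (0:ℝ) t ⊆ Icc 0 T := Icc_subset_Icc le_rfl htT
  have h0T : (0:ℝ) ∈ Icc 0 T := ⟨le_rfl, hT⟩
  have htm : t ∈ Icc 0 T := ⟨ht0, htT⟩
  have hm10 : (-1:ℝ) ≤ 0 := by norm_num
  have h0mem : (0:ℝ) ∈ Icc (-1:ℝ) 0 := ⟨hm10, le_rfl⟩
  have h1mem : (1:ℝ) ∈ Icc (0:ℝ) 1 := ⟨zero_le_one, le_rfl⟩
  have h0mem' : (0:ℝ) ∈ Icc (0:ℝ) 1 := ⟨le_rfl, zero_le_one⟩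
  -- initial-data identifications
  have hIu0 : (∫ x in (-1:ℝ)..0, (u 0 x) ^ 2) = ∫ x in (-1:ℝ)..0, (u₀ x) ^ 2 := by
    apply intervalIntegral.integral_congr
    intro x hx
    rw [uIcc_of_le hm10] at hx
    show u 0 x ^ 2 = u₀ x ^ 2
    rw [hP.initu x hx]
  have hvx0 : ∀ x ∈ Ioo (0:ℝ) 1, vx 0 x = v₀' x := by
    intro x hx
    have h1 : HasDerivAt (fun y => v 0 y) (vx 0 x) x :=
      hP.waveSol.hvx 0 h0T x (Ioo_subset_Icc_self hx)
    have h2 : HasDerivAt v₀ (vx 0 x) x := by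
      apply h1.congr_of_eventuallyEq
      filter_upwards [Icc_mem_nhds hx.1 hx.2] with y hy
      exact (hP.initv y hy).symm
    exact h2.unique (hv₀d x (Ioo_subset_Icc_self hx))
  have hIw0 : (∫ x in (0:ℝ)..1, ((vt 0 x) ^ 2 + (vx 0 x) ^ 2))
      = ∫ x in (0:ℝ)..1, ((v₁ x) ^ 2 + (v₀' x) ^ 2) := by
    rw [intervalIntegral.integral_of_le zero_le_one,
      intervalIntegral.integral_of_le zero_le_one,
      MeasureTheory.integral_Ioc_eq_integral_Ioo,
      MeasureTheory.integral_Ioc_eq_integral_Ioo]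
    apply MeasureTheory.setIntegral_congr_fun measurableSet_Ioo
    intro x hx
    show vt 0 x ^ 2 + vx 0 x ^ 2 = v₁ x ^ 2 + v₀' x ^ 2
    rw [hP.initvt x (Ioo_subset_Icc_self hx), hvx0 x hx]
  rcases hT.eq_or_lt with rfl | hT0
  · -- T = 0, hence t = 0
    have ht' : t = 0 := le_antisymm htT ht0
    subst ht'
    simp only [intervalIntegral.integral_same]
    rw [hIu0, hIw0, hP.inith']
    ring
  -- now 0 < T
  -- restricted continuity on the rectangles
  have hcu := hP.heatSol.contu.mono (prod_mono hsub subset_rfl)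
  have hcut := hP.heatSol.contut.mono (prod_mono hsub subset_rfl)
  have hcux := hP.heatSol.contux.mono (prod_mono hsub subset_rfl)
  have hcuxx := hP.heatSol.contuxx.mono (prod_mono hsub subset_rfl)
  have hcvt := hP.waveSol.contvt.mono (prod_mono hsub subset_rfl)
  have hcvx := hP.waveSol.contvx.mono (prod_mono hsub subset_rfl)
  have hcvtt := hP.waveSol.contvtt.mono (prod_mono hsub subset_rfl)
  have hcvtx := hP.waveSol.contvtx.mono (prod_mono hsub subset_rfl)
  have hcvxx := hP.waveSol.contvxx.mono (prod_mono hsub subset_rfl)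
  have hch' : ContinuousOn h' (Icc 0 t) :=
    fun s hs => ((hP.hdd s (hsub hs)).continuousAt).continuousWithinAt
  -- vt s 1 = 0
  have hvt1 : ∀ s ∈ Icc (0:ℝ) T, vt s 1 = 0 := by
    intro s hs
    have h1 : HasDerivWithinAt (fun τ => v τ 1) (vt s 1) (Icc 0 T) s :=
      (hP.waveSol.hvt s hs 1 h1mem).hasDerivWithinAt
    have h2 : HasDerivWithinAt (fun τ => v τ 1) 0 (Icc 0 T) s :=
      (hasDerivWithinAt_const s (Icc 0 T) (0:ℝ)).congr
        (fun y hy => (hP.bdryv y hy)) (hP.bdryv s hs)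
    exact ((uniqueDiffOn_Icc hT0) s hs).eq_deriv _ h1 h2
  ------------------------------------------------------------------
  -- Piece A : heat energy
  ------------------------------------------------------------------
  have hAx : ∀ x ∈ Icc (-1:ℝ) 0,
      (∫ s in (0:ℝ)..t, u s x * ut s x)
        = (1/2) * (u t x) ^ 2 - (1/2) * (u 0 x) ^ 2 := by
    intro x hx
    have hder : ∀ s ∈ uIcc (0:ℝ) t,
        HasDerivAt (fun τ => (1/2) * (u τ x) ^ 2) (u s x * ut s x) s := by
      intro s hs
      rw [uIcc_of_le ht0] at hs
      have h1 := hP.heatSol.hut s (hsub hs) x hx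
      have h2 := (h1.pow 2).const_mul (1/2 : ℝ)
      exact h2.congr_deriv (by ring)
    have hint : IntervalIntegrable (fun s => u s x * ut s x) volume 0 t := by
      apply ContinuousOn.intervalIntegrable
      rw [uIcc_of_le ht0]
      exact (cont_left hcu hx).mul (cont_left hcut hx)
    exact intervalIntegral.integral_eq_sub_of_hasDerivAt hder hint
  have hswapA : (∫ x in (-1:ℝ)..0, ∫ s in (0:ℝ)..t, u s x * ut s x)
      = ∫ s in (0:ℝ)..t, ∫ x in (-1:ℝ)..0, u s x * ut s x :=
    (swap_aux (f := fun s x => u s x * ut s x) ht0 hm10 (hcu.mul hcut)).1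
  have hQint : IntervalIntegrable
      (fun s => ∫ x in (-1:ℝ)..0, (ux s x) ^ 2) volume 0 t :=
    (swap_aux (f := fun s x => (ux s x) ^ 2) ht0 hm10 (hcux.pow 2)).2
  have hApartx : ∀ s ∈ Icc (0:ℝ) t,
      (∫ x in (-1:ℝ)..0, u s x * ut s x)
        = h' s * ux s 0 - ∫ x in (-1:ℝ)..0, (ux s x) ^ 2 := by
    intro s hs
    have hsT := hsub hs
    have h1 : (∫ x in (-1:ℝ)..0, u s x * ut s x)
        = ∫ x in (-1:ℝ)..0, u s x * uxx s x := by
      apply intervalIntegral.integral_congr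
      intro x hx
      rw [uIcc_of_le hm10] at hx
      show u s x * ut s x = u s x * uxx s x
      rw [hP.heatSol.heat s hsT x hx]
    have hi1 : IntervalIntegrable (fun x => ux s x) volume (-1) 0 := by
      apply ContinuousOn.intervalIntegrable
      rw [uIcc_of_le hm10]
      exact cont_right hcux hs
    have hi2 : IntervalIntegrable (fun x => uxx s x) volume (-1) 0 := by
      apply ContinuousOn.intervalIntegrable
      rw [uIcc_of_le hm10]
      exact cont_right hcuxx hs
    rw [h1, intervalIntegral.integral_mul_deriv_eq_deriv_mul
      (fun x hx => hP.heatSol.hux s hsT x (by rwa [uIcc_of_le hm10] at hx))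
      (fun x hx => hP.heatSol.huxx s hsT x (by rwa [uIcc_of_le hm10] at hx))
      hi1 hi2]
    have h2 : (∫ x in (-1:ℝ)..0, ux s x * ux s x)
        = ∫ x in (-1:ℝ)..0, (ux s x) ^ 2 :=
      intervalIntegral.integral_congr (fun x _ => (sq (ux s x)).symm)
    rw [h2, hP.bdryu s hsT, hP.kinematic1 s hsT]
    ring
  have hh'ux : IntervalIntegrable (fun s => h' s * ux s 0) volume 0 t := by
    apply ContinuousOn.intervalIntegrable
    rw [uIcc_of_le ht0]
    exact hch'.mul (cont_left hcux h0mem)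
  have hA : (1/2) * (∫ x in (-1:ℝ)..0, (u t x) ^ 2)
      - (1/2) * (∫ x in (-1:ℝ)..0, (u 0 x) ^ 2)
      = (∫ s in (0:ℝ)..t, h' s * ux s 0)
        - ∫ s in (0:ℝ)..t, ∫ x in (-1:ℝ)..0, (ux s x) ^ 2 := by
    have hl : (∫ x in (-1:ℝ)..0, ((1/2) * (u t x) ^ 2 - (1/2) * (u 0 x) ^ 2))
        = (1/2) * (∫ x in (-1:ℝ)..0, (u t x) ^ 2)
          - (1/2) * (∫ x in (-1:ℝ)..0, (u 0 x) ^ 2) := by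
      rw [intervalIntegral.integral_sub, intervalIntegral.integral_const_mul,
        intervalIntegral.integral_const_mul]
      · apply ContinuousOn.intervalIntegrable
        rw [uIcc_of_le hm10]
        exact continuousOn_const.mul ((cont_right hcu (⟨ht0, le_rfl⟩ : t ∈ Icc 0 t)).pow 2)
      · apply ContinuousOn.intervalIntegrable
        rw [uIcc_of_le hm10]
        exact continuousOn_const.mul ((cont_right hcu (⟨le_rfl, ht0⟩ : (0:ℝ) ∈ Icc 0 t)).pow 2)
    have hm : (∫ x in (-1:ℝ)..0, ((1/2) * (u t x) ^ 2 - (1/2) * (u 0 x) ^ 2))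
        = ∫ x in (-1:ℝ)..0, ∫ s in (0:ℝ)..t, u s x * ut s x := by
      apply intervalIntegral.integral_congr
      intro x hx
      rw [uIcc_of_le hm10] at hx
      exact (hAx x hx).symm
    have hr : (∫ s in (0:ℝ)..t, ∫ x in (-1:ℝ)..0, u s x * ut s x)
        = (∫ s in (0:ℝ)..t, h' s * ux s 0)
          - ∫ s in (0:ℝ)..t, ∫ x in (-1:ℝ)..0, (ux s x) ^ 2 := by
      rw [← intervalIntegral.integral_sub hh'ux hQint]
      apply intervalIntegral.integral_congr
      intro s hs
      rw [uIcc_of_le ht0] at hs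
      exact hApartx s hs
    rw [← hl, hm, hswapA, hr]
  ------------------------------------------------------------------
  -- Piece B : point-mass energy
  ------------------------------------------------------------------
  have hB : (1/2) * (h' t) ^ 2
      = (∫ s in (0:ℝ)..t, h' s * vx s 0) - ∫ s in (0:ℝ)..t, h' s * ux s 0 := by
    have hftc : (∫ s in (0:ℝ)..t, h' s * h'' s)
        = (1/2) * (h' t) ^ 2 - (1/2) * (h' 0) ^ 2 := by
      apply intervalIntegral.integral_eq_sub_of_hasDerivAt
      · intro s hs
        rw [uIcc_of_le ht0] at hs
        have h1 := ((hP.hdd s (hsub hs)).pow 2).const_mul (1/2 : ℝ)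
        exact h1.congr_deriv (by ring)
      · apply ContinuousOn.intervalIntegrable
        rw [uIcc_of_le ht0]
        exact hch'.mul (hP.conth''.mono hsub)
    rw [hP.inith'] at hftc
    have h2 : (∫ s in (0:ℝ)..t, h' s * h'' s)
        = ∫ s in (0:ℝ)..t, (h' s * vx s 0 - h' s * ux s 0) := by
      apply intervalIntegral.integral_congr
      intro s hs
      rw [uIcc_of_le ht0] at hs
      show h' s * h'' s = h' s * vx s 0 - h' s * ux s 0
      rw [hP.newton s (hsub hs)]
      ring
    have hh'vx : IntervalIntegrable (fun s => h' s * vx s 0) volume 0 t := by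
      apply ContinuousOn.intervalIntegrable
      rw [uIcc_of_le ht0]
      exact hch'.mul (cont_left hcvx h0mem')
    rw [h2, intervalIntegral.integral_sub hh'vx hh'ux] at hftc
    norm_num at hftc
    linarith [hftc]
  ------------------------------------------------------------------
  -- Piece C : wave energy
  ------------------------------------------------------------------
  have hCx : ∀ x ∈ Icc (0:ℝ) 1,
      (∫ s in (0:ℝ)..t, (vt s x * vtt s x + vx s x * vtx s x))
        = (1/2) * ((vt t x) ^ 2 + (vx t x) ^ 2)
          - (1/2) * ((vt 0 x) ^ 2 + (vx 0 x) ^ 2) := by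
    intro x hx
    have hder : ∀ s ∈ uIcc (0:ℝ) t,
        HasDerivAt (fun τ => (1/2) * ((vt τ x) ^ 2 + (vx τ x) ^ 2))
          (vt s x * vtt s x + vx s x * vtx s x) s := by
      intro s hs
      rw [uIcc_of_le ht0] at hs
      have h1 := hP.waveSol.hvtt s (hsub hs) x hx
      have h2 := hP.waveSol.hvxt s (hsub hs) x hx
      have h3 := ((h1.pow 2).add (h2.pow 2)).const_mul (1/2 : ℝ)
      exact h3.congr_deriv (by ring)
    have hint : IntervalIntegrable
        (fun s => vt s x * vtt s x + vx s x * vtx s x) volume 0 t := by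
      apply ContinuousOn.intervalIntegrable
      rw [uIcc_of_le ht0]
      exact ((cont_left hcvt hx).mul (cont_left hcvtt hx)).add
        ((cont_left hcvx hx).mul (cont_left hcvtx hx))
    exact intervalIntegral.integral_eq_sub_of_hasDerivAt hder hint
  have hswapC : (∫ x in (0:ℝ)..1, ∫ s in (0:ℝ)..t, (vt s x * vtt s x + vx s x * vtx s x))
      = ∫ s in (0:ℝ)..t, ∫ x in (0:ℝ)..1, (vt s x * vtt s x + vx s x * vtx s x) :=
    (swap_aux (f := fun s x => vt s x * vtt s x + vx s x * vtx s x) ht0 zero_le_one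
      ((hcvt.mul hcvtt).add (hcvx.mul hcvtx))).1

  have hCpartx : ∀ s ∈ Icc (0:ℝ) t,
      (∫ x in (0:ℝ)..1, (vt s x * vtt s x + vx s x * vtx s x))
        = -(h' s * vx s 0) := by
    intro s hs
    have hsT := hsub hs
    have key : (∫ x in (0:ℝ)..1, (vtx s x * vx s x + vt s x * vxx s x))
        = vt s 1 * vx s 1 - vt s 0 * vx s 0 := by
      apply intervalIntegral.integral_eq_sub_of_hasDerivAt
        (f := fun x => vt s x * vx s x)
      · intro x hx
        rw [uIcc_of_le zero_le_one] at hx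
        exact (hP.waveSol.hvtx s hsT x hx).mul (hP.waveSol.hvxx s hsT x hx)
      · apply ContinuousOn.intervalIntegrable
        rw [uIcc_of_le zero_le_one]
        exact ((cont_right hcvtx hs).mul (cont_right hcvx hs)).add
          ((cont_right hcvt hs).mul (cont_right hcvxx hs))
    have h1 : (∫ x in (0:ℝ)..1, (vt s x * vtt s x + vx s x * vtx s x))
        = ∫ x in (0:ℝ)..1, (vtx s x * vx s x + vt s x * vxx s x) := by
      apply intervalIntegral.integral_congr
      intro x hx
      rw [uIcc_of_le zero_le_one] at hx
      show vt s x * vtt s x + vx s x * vtx s x = vtx s x * vx s x + vt s x * vxx s x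
      rw [hP.waveSol.wave s hsT x hx]
      ring
    rw [h1, key, hvt1 s hsT, ← hP.kinematic2 s hsT]
    ring
  have hC : (1/2) * (∫ x in (0:ℝ)..1, ((vt t x) ^ 2 + (vx t x) ^ 2))
      - (1/2) * (∫ x in (0:ℝ)..1, ((vt 0 x) ^ 2 + (vx 0 x) ^ 2))
      = - ∫ s in (0:ℝ)..t, h' s * vx s 0 := by
    have hl : (∫ x in (0:ℝ)..1, ((1/2) * ((vt t x) ^ 2 + (vx t x) ^ 2)
          - (1/2) * ((vt 0 x) ^ 2 + (vx 0 x) ^ 2)))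
        = (1/2) * (∫ x in (0:ℝ)..1, ((vt t x) ^ 2 + (vx t x) ^ 2))
          - (1/2) * (∫ x in (0:ℝ)..1, ((vt 0 x) ^ 2 + (vx 0 x) ^ 2)) := by
      rw [intervalIntegral.integral_sub, intervalIntegral.integral_const_mul,
        intervalIntegral.integral_const_mul]
      · apply ContinuousOn.intervalIntegrable
        rw [uIcc_of_le zero_le_one]
        exact continuousOn_const.mul (((cont_right hcvt (⟨ht0, le_rfl⟩ : t ∈ Icc 0 t)).pow 2).add
          ((cont_right hcvx (⟨ht0, le_rfl⟩ : t ∈ Icc 0 t)).pow 2))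
      · apply ContinuousOn.intervalIntegrable
        rw [uIcc_of_le zero_le_one]
        exact continuousOn_const.mul (((cont_right hcvt (⟨le_rfl, ht0⟩ : (0:ℝ) ∈ Icc 0 t)).pow 2).add
          ((cont_right hcvx (⟨le_rfl, ht0⟩ : (0:ℝ) ∈ Icc 0 t)).pow 2))
    have hm : (∫ x in (0:ℝ)..1, ((1/2) * ((vt t x) ^ 2 + (vx t x) ^ 2)
          - (1/2) * ((vt 0 x) ^ 2 + (vx 0 x) ^ 2)))
        = ∫ x in (0:ℝ)..1, ∫ s in (0:ℝ)..t, (vt s x * vtt s x + vx s x * vtx s x) := by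
      apply intervalIntegral.integral_congr
      intro x hx
      rw [uIcc_of_le zero_le_one] at hx
      exact (hCx x hx).symm
    have hr : (∫ s in (0:ℝ)..t, ∫ x in (0:ℝ)..1, (vt s x * vtt s x + vx s x * vtx s x))
        = ∫ s in (0:ℝ)..t, -(h' s * vx s 0) := by
      apply intervalIntegral.integral_congr
      intro s hs
      rw [uIcc_of_le ht0] at hs
      exact hCpartx s hs
    rw [← hl, hm, hswapC, hr, intervalIntegral.integral_neg]
  ------------------------------------------------------------------
  -- Assemble
  ------------------------------------------------------------------
  rw [← hIu0, ← hIw0]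
  linarith [hA, hB, hC]
end

section
/- Classical solutions of Problem 2 are unique: if (u,v,h) is a classical solution of Problem 2 (the heat–wave system coupled through a point mass) on [0,T] with zero initial data u₀ = 0, v₀ = 0, v₁ = 0, then u is identically zero on [0,T]×[−1,0], v is identically zero on [0,T]×[0,1], and h is identically zero on [0,T]. Equivalently, two classical solutions of Problem 2 with the same initial data coincide. -/
open Set Real MeasureTheory intervalIntegral
open Topology Filter


lemma my_slice {f : ℝ → ℝ → ℝ} {s A : Set ℝ} {t : ℝ}
    (hf : ContinuousOn (fun p : ℝ × ℝ => f p.1 p.2) (s ×ˢ A)) (ht : t ∈ s) :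
    ContinuousOn (fun x => f t x) A := by
  have : (fun x => f t x) = (fun p : ℝ × ℝ => f p.1 p.2) ∘ (fun x => (t, x)) := rfl
  rw [this]
  exact hf.comp (Continuous.continuousOn (by continuity)) (fun x hx => ⟨ht, hx⟩)

lemma my_aesm {f : ℝ → ℝ} {a b : ℝ} (hab : a ≤ b) (h : ContinuousOn f (Icc a b)) :
    AEStronglyMeasurable f (volume.restrict (Set.uIoc a b)) := by
  rw [uIoc_of_le hab]
  exact (h.mono Ioc_subset_Icc_self).aestronglyMeasurable measurableSet_Ioc

lemma my_zero_of_integral_zero {f : ℝ → ℝ} {a b : ℝ} (hab : a < b)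
    (hc : ContinuousOn f (Icc a b)) (hnn : ∀ x ∈ Icc a b, 0 ≤ f x)
    (hz : (∫ x in a..b, f x) = 0) : ∀ x ∈ Icc a b, f x = 0 := by
  intro x hx
  by_contra hne
  have hpos : 0 < f x := lt_of_le_of_ne (hnn x hx) (Ne.symm hne)
  have := intervalIntegral.integral_pos hab hc
    (fun y hy => hnn y (Ioc_subset_Icc_self hy)) ⟨x, hx, hpos⟩
  linarith

lemma my_param_cont {f : ℝ → ℝ → ℝ} {T a b C : ℝ} (hab : a ≤ b)
    (hcontx : ∀ t ∈ Icc (0:ℝ) T, ContinuousOn (fun x => f t x) (Icc a b))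
    (hcontt : ∀ t ∈ Icc (0:ℝ) T, ∀ x ∈ Icc a b, ContinuousWithinAt (fun τ => f τ x) (Icc 0 T) t)
    (hbd : ∀ t ∈ Icc (0:ℝ) T, ∀ x ∈ Icc a b, ‖f t x‖ ≤ C) :
    ContinuousOn (fun t => ∫ x in a..b, f t x) (Icc 0 T) := by
  intro t ht
  apply intervalIntegral.continuousWithinAt_of_dominated_interval (bound := fun _ => C)
  · filter_upwards [self_mem_nhdsWithin] with t' ht'
    exact my_aesm hab (hcontx t' ht')
  · filter_upwards [self_mem_nhdsWithin] with t' ht'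
    refine Filter.Eventually.of_forall (fun x hx => ?_)
    rw [uIoc_of_le hab] at hx
    exact hbd t' ht' x (Ioc_subset_Icc_self hx)
  · exact intervalIntegrable_const
  · refine Filter.Eventually.of_forall (fun x hx => ?_)
    rw [uIoc_of_le hab] at hx
    exact hcontt t ht x (Ioc_subset_Icc_self hx)

lemma my_param_deriv {f f' : ℝ → ℝ → ℝ} {T a b C : ℝ} (hab : a ≤ b) {t₀ : ℝ} (ht₀ : t₀ ∈ Ioo 0 T)
    (hcontx : ∀ t ∈ Icc (0:ℝ) T, ContinuousOn (fun x => f t x) (Icc a b))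
    (hcontx' : ContinuousOn (fun x => f' t₀ x) (Icc a b))
    (hderiv : ∀ t ∈ Icc (0:ℝ) T, ∀ x ∈ Icc a b, HasDerivAt (fun τ => f τ x) (f' t x) t)
    (hbd : ∀ t ∈ Icc (0:ℝ) T, ∀ x ∈ Icc a b, ‖f' t x‖ ≤ C) :
    HasDerivAt (fun t => ∫ x in a..b, f t x) (∫ x in a..b, f' t₀ x) t₀ := by
  have hε : 0 < min t₀ (T - t₀) := lt_min ht₀.1 (sub_pos.2 ht₀.2)
  have hball : Metric.ball t₀ (min t₀ (T - t₀)) ⊆ Icc 0 T := by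
    intro t ht
    rw [Metric.mem_ball, Real.dist_eq, abs_lt] at ht
    have h1 := min_le_left t₀ (T - t₀)
    have h2 := min_le_right t₀ (T - t₀)
    constructor <;> nlinarith [ht.1, ht.2]
  refine (intervalIntegral.hasDerivAt_integral_of_dominated_loc_of_deriv_le
    (F := f) (F' := f') (bound := fun _ => C) (Metric.ball_mem_nhds t₀ hε) ?_ ?_ ?_ ?_ ?_ ?_).2
  · filter_upwards [Icc_mem_nhds ht₀.1 ht₀.2] with t ht
    exact my_aesm hab (hcontx t ht)
  · refine ContinuousOn.intervalIntegrable ?_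
    rw [uIcc_of_le hab]; exact hcontx t₀ (Ioo_subset_Icc_self ht₀)
  · exact my_aesm hab hcontx'
  · refine Filter.Eventually.of_forall fun x hx t ht => ?_
    rw [uIoc_of_le hab] at hx
    exact hbd t (hball ht) x (Ioc_subset_Icc_self hx)
  · exact intervalIntegrable_const
  · refine Filter.Eventually.of_forall fun x hx t ht => ?_
    rw [uIoc_of_le hab] at hx
    exact hderiv t (hball ht) x (Ioc_subset_Icc_self hx)

lemma my_endpoint {g : ℝ → ℝ} {a b x : ℝ} (hab : a < b) (hx : x ∈ Icc a b)
    (hcont : ContinuousAt g x) (hz : ∀ y ∈ Ioo a b, g y = 0) : g x = 0 := by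
  have h1 : x ∈ closure (Ioo a b) := by rw [closure_Ioo hab.ne]; exact hx
  have h2 : Filter.NeBot (𝓝[Ioo a b] x) := mem_closure_iff_nhdsWithin_neBot.1 h1
  have h3 : Filter.Tendsto g (𝓝[Ioo a b] x) (𝓝 (g x)) := hcont.continuousWithinAt
  have h4 : Filter.Tendsto g (𝓝[Ioo a b] x) (𝓝 0) := by
    apply Filter.Tendsto.congr' _ tendsto_const_nhds
    filter_upwards [self_mem_nhdsWithin] with y hy
    exact (hz y hy).symm
  exact tendsto_nhds_unique h3 h4

lemma my_ii {f : ℝ → ℝ} {a b : ℝ} (hab : a ≤ b) (h : ContinuousOn f (Icc a b)) :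
    IntervalIntegrable f volume a b := by
  apply ContinuousOn.intervalIntegrable
  rwa [uIcc_of_le hab]
/-- Uniqueness for Problem 2: a classical solution `(u,v,h)` of the
heat–wave system coupled through a point mass on `[0,T]` with zero initial data
vanishes identically. -/
theorem problem2_uniqueness (T : ℝ) (hT : 0 ≤ T)
    (u ut ux uxx v vt vx vtt vtx vxx : ℝ → ℝ → ℝ) (h h' h'' : ℝ → ℝ)
    (hP : Problem2 T u ut ux uxx v vt vx vtt vtx vxx h h' h''
      (fun _ => 0) (fun _ => 0) (fun _ => 0)) :
    (∀ t ∈ Icc (0:ℝ) T, ∀ x ∈ Icc (-1:ℝ) 0, u t x = 0) ∧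
    (∀ t ∈ Icc (0:ℝ) T, ∀ x ∈ Icc (0:ℝ) 1, v t x = 0) ∧
    (∀ t ∈ Icc (0:ℝ) T, h t = 0) := by
  obtain ⟨hH, hW, hd, hdd, conth'', kin1, kin2, newton, bdryu, bdryv, initu, inith, inith', initv, initvt⟩ := hP
  have h00 : (0:ℝ) ∈ Icc (0:ℝ) T := ⟨le_refl 0, hT⟩
  have hm10 : (-1:ℝ) ≤ 0 := by norm_num
  have h01 : (0:ℝ) ≤ 1 := by norm_num
  have hcu : ∀ t ∈ Icc (0:ℝ) T, ContinuousOn (fun x => u t x) (Icc (-1) 0) :=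
    fun t ht => my_slice hH.contu ht
  have hcut : ∀ t ∈ Icc (0:ℝ) T, ContinuousOn (fun x => ut t x) (Icc (-1) 0) :=
    fun t ht => my_slice hH.contut ht
  have hcux : ∀ t ∈ Icc (0:ℝ) T, ContinuousOn (fun x => ux t x) (Icc (-1) 0) :=
    fun t ht => my_slice hH.contux ht
  have hcuxx : ∀ t ∈ Icc (0:ℝ) T, ContinuousOn (fun x => uxx t x) (Icc (-1) 0) :=
    fun t ht => my_slice hH.contuxx ht
  have hcvt : ∀ t ∈ Icc (0:ℝ) T, ContinuousOn (fun x => vt t x) (Icc 0 1) :=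
    fun t ht => my_slice hW.contvt ht
  have hcvx : ∀ t ∈ Icc (0:ℝ) T, ContinuousOn (fun x => vx t x) (Icc 0 1) :=
    fun t ht => my_slice hW.contvx ht
  have hcvtt : ∀ t ∈ Icc (0:ℝ) T, ContinuousOn (fun x => vtt t x) (Icc 0 1) :=
    fun t ht => my_slice hW.contvtt ht
  have hcvtx : ∀ t ∈ Icc (0:ℝ) T, ContinuousOn (fun x => vtx t x) (Icc 0 1) :=
    fun t ht => my_slice hW.contvtx ht
  have hcvxx : ∀ t ∈ Icc (0:ℝ) T, ContinuousOn (fun x => vxx t x) (Icc 0 1) :=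
    fun t ht => my_slice hW.contvxx ht
  obtain ⟨Cu, hCu⟩ := (isCompact_Icc.prod isCompact_Icc).exists_bound_of_continuousOn hH.contu
  obtain ⟨Cut, hCut⟩ := (isCompact_Icc.prod isCompact_Icc).exists_bound_of_continuousOn hH.contut
  obtain ⟨Cvt, hCvt⟩ := (isCompact_Icc.prod isCompact_Icc).exists_bound_of_continuousOn hW.contvt
  obtain ⟨Cvx, hCvx⟩ := (isCompact_Icc.prod isCompact_Icc).exists_bound_of_continuousOn hW.contvx
  obtain ⟨Cvtt, hCvtt⟩ := (isCompact_Icc.prod isCompact_Icc).exists_bound_of_continuousOn hW.contvtt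
  obtain ⟨Cvtx, hCvtx⟩ := (isCompact_Icc.prod isCompact_Icc).exists_bound_of_continuousOn hW.contvtx
  have hbu : ∀ t ∈ Icc (0:ℝ) T, ∀ x ∈ Icc (-1:ℝ) 0, |u t x| ≤ Cu := fun t ht x hx => by
    simpa [Real.norm_eq_abs] using hCu (t, x) ⟨ht, hx⟩
  have hbut : ∀ t ∈ Icc (0:ℝ) T, ∀ x ∈ Icc (-1:ℝ) 0, |ut t x| ≤ Cut := fun t ht x hx => by
    simpa [Real.norm_eq_abs] using hCut (t, x) ⟨ht, hx⟩
  have hbvt : ∀ t ∈ Icc (0:ℝ) T, ∀ x ∈ Icc (0:ℝ) 1, |vt t x| ≤ Cvt := fun t ht x hx => by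
    simpa [Real.norm_eq_abs] using hCvt (t, x) ⟨ht, hx⟩
  have hbvx : ∀ t ∈ Icc (0:ℝ) T, ∀ x ∈ Icc (0:ℝ) 1, |vx t x| ≤ Cvx := fun t ht x hx => by
    simpa [Real.norm_eq_abs] using hCvx (t, x) ⟨ht, hx⟩
  have hbvtt : ∀ t ∈ Icc (0:ℝ) T, ∀ x ∈ Icc (0:ℝ) 1, |vtt t x| ≤ Cvtt := fun t ht x hx => by
    simpa [Real.norm_eq_abs] using hCvtt (t, x) ⟨ht, hx⟩
  have hbvtx : ∀ t ∈ Icc (0:ℝ) T, ∀ x ∈ Icc (0:ℝ) 1, |vtx t x| ≤ Cvtx := fun t ht x hx => by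
    simpa [Real.norm_eq_abs] using hCvtx (t, x) ⟨ht, hx⟩
  have hCu0 : 0 ≤ Cu := le_trans (abs_nonneg _) (hbu 0 h00 0 ⟨hm10, le_refl 0⟩)
  have hCut0 : 0 ≤ Cut := le_trans (abs_nonneg _) (hbut 0 h00 0 ⟨hm10, le_refl 0⟩)
  have hCvt0 : 0 ≤ Cvt := le_trans (abs_nonneg _) (hbvt 0 h00 0 ⟨le_refl 0, h01⟩)
  have hCvx0 : 0 ≤ Cvx := le_trans (abs_nonneg _) (hbvx 0 h00 0 ⟨le_refl 0, h01⟩)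
  have hCvtt0 : 0 ≤ Cvtt := le_trans (abs_nonneg _) (hbvtt 0 h00 0 ⟨le_refl 0, h01⟩)
  have hCvtx0 : 0 ≤ Cvtx := le_trans (abs_nonneg _) (hbvtx 0 h00 0 ⟨le_refl 0, h01⟩)
  set E : ℝ → ℝ := fun t => (∫ x in (-1:ℝ)..0, (u t x)^2) +
    ((∫ x in (0:ℝ)..1, (vt t x)^2 + (vx t x)^2) + (h' t)^2) with hEdef
  have contE : ContinuousOn E (Icc 0 T) := by
    apply ContinuousOn.add
    · apply my_param_cont (C := Cu^2) hm10
      · exact fun t ht => (hcu t ht).pow 2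
      · exact fun t ht x hx => ((hH.hut t ht x hx).continuousAt.continuousWithinAt).pow 2
      · intro t ht x hx
        rw [Real.norm_eq_abs, abs_pow]
        exact pow_le_pow_left₀ (abs_nonneg _) (hbu t ht x hx) 2
    · apply ContinuousOn.add
      · apply my_param_cont (C := Cvt^2 + Cvx^2) h01
        · exact fun t ht => ((hcvt t ht).pow 2).add ((hcvx t ht).pow 2)
        · exact fun t ht x hx =>
            (((hW.hvtt t ht x hx).continuousAt.continuousWithinAt).pow 2).add
            (((hW.hvxt t ht x hx).continuousAt.continuousWithinAt).pow 2)
        · intro t ht x hx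
          have e1 : (vt t x)^2 ≤ Cvt^2 := by
            rw [← sq_abs]; exact pow_le_pow_left₀ (abs_nonneg _) (hbvt t ht x hx) 2
          have e2 : (vx t x)^2 ≤ Cvx^2 := by
            rw [← sq_abs]; exact pow_le_pow_left₀ (abs_nonneg _) (hbvx t ht x hx) 2
          rw [Real.norm_eq_abs, abs_of_nonneg (by positivity)]
          linarith
      · exact fun t ht => ((hdd t ht).continuousAt.continuousWithinAt).pow 2
  have hvx0 : ∀ x ∈ Icc (0:ℝ) 1, vx 0 x = 0 := by
    have hint : ∀ y ∈ Ioo (0:ℝ) 1, vx 0 y = 0 := by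
      intro y hy
      have hev : (fun _ : ℝ => (0:ℝ)) =ᶠ[nhds y] (fun z => v 0 z) := by
        filter_upwards [Ioo_mem_nhds hy.1 hy.2] with z hz
        simpa using (initv z (Ioo_subset_Icc_self hz)).symm
      have := (hW.hvx 0 h00 y (Ioo_subset_Icc_self hy)).congr_of_eventuallyEq hev
      exact this.unique (hasDerivAt_const y 0)
    intro x hx
    exact my_endpoint zero_lt_one hx (hW.hvxx 0 h00 x hx).continuousAt hint
  have hE0 : E 0 = 0 := by
    have e1 : (∫ x in (-1:ℝ)..0, (u 0 x)^2) = 0 := by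
      have he : EqOn (fun x => (u 0 x)^2) (fun _ => (0:ℝ)) (uIcc (-1) 0) := by
        intro x hx; rw [uIcc_of_le hm10] at hx
        have h1 : u 0 x = 0 := by simpa using initu x hx
        show (u 0 x)^2 = 0
        rw [h1]; ring
      rw [intervalIntegral.integral_congr he, intervalIntegral.integral_zero]
    have e2 : (∫ x in (0:ℝ)..1, (vt 0 x)^2 + (vx 0 x)^2) = 0 := by
      have he : EqOn (fun x => (vt 0 x)^2 + (vx 0 x)^2) (fun _ => (0:ℝ)) (uIcc 0 1) := by
        intro x hx; rw [uIcc_of_le h01] at hx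
        have h1 : vt 0 x = 0 := by simpa using initvt x hx
        have h2 := hvx0 x hx
        show (vt 0 x)^2 + (vx 0 x)^2 = 0
        rw [h1, h2]; ring
      rw [intervalIntegral.integral_congr he, intervalIntegral.integral_zero]
    rw [hEdef]
    dsimp only
    rw [e1, e2, inith']
    ring
  have hvt1 : ∀ t ∈ Ioo (0:ℝ) T, vt t 1 = 0 := by
    intro t htI
    have ht := Ioo_subset_Icc_self htI
    have hev : (fun _ : ℝ => (0:ℝ)) =ᶠ[nhds t] (fun τ => v τ 1) := by
      filter_upwards [Ioo_mem_nhds htI.1 htI.2] with τ hτ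
      exact (bdryv τ (Ioo_subset_Icc_self hτ)).symm
    have := (hW.hvt t ht 1 ⟨h01, le_refl 1⟩).congr_of_eventuallyEq hev
    exact this.unique (hasDerivAt_const t 0)
  have hderE : ∀ t ∈ Ioo (0:ℝ) T,
      HasDerivAt E (-(∫ x in (-1:ℝ)..0, 2*(ux t x * ux t x))) t := by
    intro t htI
    have ht := Ioo_subset_Icc_self htI
    have hD1 : HasDerivAt (fun τ => ∫ x in (-1:ℝ)..0, (u τ x)^2)
        (∫ x in (-1:ℝ)..0, 2*(u t x * ut t x)) t := by
      apply my_param_deriv (f := fun τ x => (u τ x)^2)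
        (f' := fun τ x => 2*(u τ x * ut τ x)) (C := 2*(Cu*Cut)) hm10 htI
      · exact fun τ hτ => (hcu τ hτ).pow 2
      · exact continuousOn_const.mul ((hcu t ht).mul (hcut t ht))
      · intro τ hτ x hx
        have hp := (hH.hut τ hτ x hx).fun_pow 2
        refine hp.congr_deriv ?_
        push_cast; ring
      · intro τ hτ x hx
        have h1 := hbu τ hτ x hx
        have h2 := hbut τ hτ x hx
        have h3 : |u τ x| * |ut τ x| ≤ Cu * Cut := mul_le_mul h1 h2 (abs_nonneg _) hCu0
        rw [Real.norm_eq_abs, abs_mul, abs_mul, abs_two]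
        linarith
    have hD2 : HasDerivAt (fun τ => ∫ x in (0:ℝ)..1, (vt τ x)^2 + (vx τ x)^2)
        (∫ x in (0:ℝ)..1, 2*(vt t x * vtt t x) + 2*(vx t x * vtx t x)) t := by
      apply my_param_deriv (f := fun τ x => (vt τ x)^2 + (vx τ x)^2)
        (f' := fun τ x => 2*(vt τ x * vtt τ x) + 2*(vx τ x * vtx τ x))
        (C := 2*(Cvt*Cvtt) + 2*(Cvx*Cvtx)) h01 htI
      · exact fun τ hτ => ((hcvt τ hτ).pow 2).add ((hcvx τ hτ).pow 2)
      · exact (continuousOn_const.mul ((hcvt t ht).mul (hcvtt t ht))).add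
          (continuousOn_const.mul ((hcvx t ht).mul (hcvtx t ht)))
      · intro τ hτ x hx
        have hp := ((hW.hvtt τ hτ x hx).fun_pow 2).fun_add ((hW.hvxt τ hτ x hx).fun_pow 2)
        refine hp.congr_deriv ?_
        push_cast; ring
      · intro τ hτ x hx
        have h1 := hbvt τ hτ x hx
        have h2 := hbvtt τ hτ x hx
        have h3 := hbvx τ hτ x hx
        have h4 := hbvtx τ hτ x hx
        have h5 : |vt τ x| * |vtt τ x| ≤ Cvt * Cvtt := mul_le_mul h1 h2 (abs_nonneg _) hCvt0
        have h6 : |vx τ x| * |vtx τ x| ≤ Cvx * Cvtx := mul_le_mul h3 h4 (abs_nonneg _) hCvx0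
        rw [Real.norm_eq_abs]
        calc |2*(vt τ x * vtt τ x) + 2*(vx τ x * vtx τ x)|
            ≤ |2*(vt τ x * vtt τ x)| + |2*(vx τ x * vtx τ x)| := abs_add_le _ _
          _ = 2*(|vt τ x| * |vtt τ x|) + 2*(|vx τ x| * |vtx τ x|) := by
              rw [abs_mul, abs_mul, abs_mul, abs_mul, abs_two]
          _ ≤ 2*(Cvt*Cvtt) + 2*(Cvx*Cvtx) := by linarith
    have hD3 : HasDerivAt (fun τ => (h' τ)^2) (2*(h' t * h'' t)) t := by
      have hp := (hdd t ht).fun_pow 2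
      refine hp.congr_deriv ?_
      push_cast; ring
    have hsum := hD1.add (hD2.add hD3)
    have hint1 : IntervalIntegrable (fun x => 2*(ux t x * ux t x)) volume (-1) 0 :=
      my_ii hm10 (continuousOn_const.mul ((hcux t ht).mul (hcux t ht)))
    have hint2 : IntervalIntegrable (fun x => 2*(u t x * uxx t x)) volume (-1) 0 :=
      my_ii hm10 (continuousOn_const.mul ((hcu t ht).mul (hcuxx t ht)))
    have hIBP1 : (∫ x in (-1:ℝ)..0, (2*(ux t x * ux t x) + 2*(u t x * uxx t x)))
        = 2*(u t 0 * ux t 0) - 2*(u t (-1) * ux t (-1)) := by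
      apply intervalIntegral.integral_eq_sub_of_hasDerivAt (f := fun x => 2*(u t x * ux t x))
      · intro x hx
        rw [uIcc_of_le hm10] at hx
        have hp := ((hH.hux t ht x hx).fun_mul (hH.huxx t ht x hx)).const_mul (2:ℝ)
        refine hp.congr_deriv ?_
        ring
      · exact hint1.add hint2
    have hsplit : (∫ x in (-1:ℝ)..0, (2*(ux t x * ux t x) + 2*(u t x * uxx t x)))
        = (∫ x in (-1:ℝ)..0, 2*(ux t x * ux t x)) + (∫ x in (-1:ℝ)..0, 2*(u t x * uxx t x)) :=
      intervalIntegral.integral_add hint1 hint2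
    have hcg1 : (∫ x in (-1:ℝ)..0, 2*(u t x * ut t x)) = ∫ x in (-1:ℝ)..0, 2*(u t x * uxx t x) := by
      apply intervalIntegral.integral_congr
      intro x hx
      rw [uIcc_of_le hm10] at hx
      show 2*(u t x * ut t x) = 2*(u t x * uxx t x)
      rw [hH.heat t ht x hx]
    have hint3 : IntervalIntegrable (fun x => 2*(vtx t x * vx t x + vt t x * vxx t x)) volume 0 1 :=
      my_ii h01 (continuousOn_const.mul (((hcvtx t ht).mul (hcvx t ht)).add
        ((hcvt t ht).mul (hcvxx t ht))))
    have hIBP2 : (∫ x in (0:ℝ)..1, 2*(vtx t x * vx t x + vt t x * vxx t x))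
        = 2*(vt t 1 * vx t 1) - 2*(vt t 0 * vx t 0) := by
      apply intervalIntegral.integral_eq_sub_of_hasDerivAt (f := fun x => 2*(vt t x * vx t x))
      · intro x hx
        rw [uIcc_of_le h01] at hx
        exact ((hW.hvtx t ht x hx).mul (hW.hvxx t ht x hx)).const_mul (2:ℝ)
      · exact hint3
    have hcg2 : (∫ x in (0:ℝ)..1, 2*(vt t x * vtt t x) + 2*(vx t x * vtx t x))
        = ∫ x in (0:ℝ)..1, 2*(vtx t x * vx t x + vt t x * vxx t x) := by
      apply intervalIntegral.integral_congr
      intro x hx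
      rw [uIcc_of_le h01] at hx
      show 2*(vt t x * vtt t x) + 2*(vx t x * vtx t x)
        = 2*(vtx t x * vx t x + vt t x * vxx t x)
      rw [hW.wave t ht x hx]; ring
    have hkey : (∫ x in (-1:ℝ)..0, 2*(u t x * ut t x)) +
        ((∫ x in (0:ℝ)..1, 2*(vt t x * vtt t x) + 2*(vx t x * vtx t x)) + 2*(h' t * h'' t))
        = -(∫ x in (-1:ℝ)..0, 2*(ux t x * ux t x)) := by
      have hrw : (∫ x in (-1:ℝ)..0, 2*(u t x * uxx t x))
          = 2*(u t 0 * ux t 0) - 2*(u t (-1) * ux t (-1))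
            - (∫ x in (-1:ℝ)..0, 2*(ux t x * ux t x)) := by
        rw [← hIBP1, hsplit]; ring
      rw [hcg1, hcg2, hIBP2, hrw, bdryu t ht, hvt1 t htI, newton t ht, kin1 t ht, ← kin2 t ht]
      ring
    rw [hkey] at hsum
    exact hsum
  have hanti : AntitoneOn E (Icc 0 T) := by
    apply antitoneOn_of_deriv_nonpos (convex_Icc 0 T) contE
    · intro t ht
      rw [interior_Icc] at ht
      exact (hderE t ht).differentiableAt.differentiableWithinAt
    · intro t ht
      rw [interior_Icc] at ht
      rw [(hderE t ht).deriv]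
      have hnn : 0 ≤ ∫ x in (-1:ℝ)..0, 2*(ux t x * ux t x) :=
        intervalIntegral.integral_nonneg hm10
          (fun x _ => mul_nonneg (by norm_num) (mul_self_nonneg _))
      linarith
  have hEzero : ∀ t ∈ Icc (0:ℝ) T, E t = 0 := by
    intro t ht
    have h1 : E t ≤ E 0 := hanti h00 ht ht.1
    have h2 : 0 ≤ E t := by
      rw [hEdef]
      dsimp only
      have i1 : 0 ≤ ∫ x in (-1:ℝ)..0, (u t x)^2 :=
        intervalIntegral.integral_nonneg hm10 (fun x _ => by positivity)
      have i2 : 0 ≤ ∫ x in (0:ℝ)..1, (vt t x)^2 + (vx t x)^2 :=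
        intervalIntegral.integral_nonneg h01 (fun x _ => by positivity)
      positivity
    linarith
  have hcomp : ∀ t ∈ Icc (0:ℝ) T, (∀ x ∈ Icc (-1:ℝ) 0, u t x = 0) ∧
      (∀ x ∈ Icc (0:ℝ) 1, vt t x = 0) ∧ h' t = 0 := by
    intro t ht
    have hEt := hEzero t ht
    rw [hEdef] at hEt
    dsimp only at hEt
    have i1 : 0 ≤ ∫ x in (-1:ℝ)..0, (u t x)^2 :=
      intervalIntegral.integral_nonneg hm10 (fun x _ => by positivity)
    have i2 : 0 ≤ ∫ x in (0:ℝ)..1, (vt t x)^2 + (vx t x)^2 :=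
      intervalIntegral.integral_nonneg h01 (fun x _ => by positivity)
    have i3 : 0 ≤ (h' t)^2 := sq_nonneg _
    have z1 : (∫ x in (-1:ℝ)..0, (u t x)^2) = 0 := by linarith
    have z2 : (∫ x in (0:ℝ)..1, (vt t x)^2 + (vx t x)^2) = 0 := by linarith
    have z3 : h' t = 0 := by
      have hsq : (h' t)^2 = 0 := by linarith
      exact pow_eq_zero_iff two_ne_zero |>.mp hsq
    refine ⟨?_, ?_, z3⟩
    · intro x hx
      have hz := my_zero_of_integral_zero (by norm_num : (-1:ℝ) < 0)
        ((hcu t ht).fun_pow 2) (fun y _ => by positivity) z1 x hx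
      exact pow_eq_zero_iff two_ne_zero |>.mp hz
    · intro x hx
      have hz := my_zero_of_integral_zero zero_lt_one
        (((hcvt t ht).fun_pow 2).fun_add ((hcvx t ht).fun_pow 2)) (fun y _ => by positivity) z2 x hx
      have h1 : (vt t x)^2 = 0 := by nlinarith [sq_nonneg (vt t x), sq_nonneg (vx t x)]
      exact pow_eq_zero_iff two_ne_zero |>.mp h1
  refine ⟨fun t ht x hx => (hcomp t ht).1 x hx, ?_, ?_⟩
  · intro t ht x hx
    have hsub : Icc (0:ℝ) t ⊆ Icc 0 T := Icc_subset_Icc le_rfl ht.2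
    have hftc : (∫ s in (0:ℝ)..t, vt s x) = v t x - v 0 x := by
      apply intervalIntegral.integral_eq_sub_of_hasDerivAt
      · intro s hs
        rw [uIcc_of_le ht.1] at hs
        exact hW.hvt s (hsub hs) x hx
      · apply ContinuousOn.intervalIntegrable
        rw [uIcc_of_le ht.1]
        exact fun s hs => ((hW.hvtt s (hsub hs) x hx).continuousAt).continuousWithinAt
    have hz : (∫ s in (0:ℝ)..t, vt s x) = 0 := by
      have he : EqOn (fun s => vt s x) (fun _ => (0:ℝ)) (uIcc 0 t) := by
        intro s hs
        rw [uIcc_of_le ht.1] at hs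
        exact (hcomp s (hsub hs)).2.1 x hx
      rw [intervalIntegral.integral_congr he, intervalIntegral.integral_zero]
    have hv0 : v 0 x = 0 := by simpa using initv x hx
    linarith
  · intro t ht
    have hsub : Icc (0:ℝ) t ⊆ Icc 0 T := Icc_subset_Icc le_rfl ht.2
    have hftc : (∫ s in (0:ℝ)..t, h' s) = h t - h 0 := by
      apply intervalIntegral.integral_eq_sub_of_hasDerivAt
      · intro s hs
        rw [uIcc_of_le ht.1] at hs
        exact hd s (hsub hs)
      · apply ContinuousOn.intervalIntegrable
        rw [uIcc_of_le ht.1]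
        exact fun s hs => ((hdd s (hsub hs)).continuousAt).continuousWithinAt
    have hz : (∫ s in (0:ℝ)..t, h' s) = 0 := by
      have he : EqOn h' (fun _ => (0:ℝ)) (uIcc 0 t) := by
        intro s hs
        rw [uIcc_of_le ht.1] at hs
        exact (hcomp s (hsub hs)).2.2
      rw [intervalIntegral.integral_congr he, intervalIntegral.integral_zero]
    rw [inith] at hftc
    linarith
end
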